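/- Let n ≥ 1 be a natural number and c > 0 a real number. Let m0, mf, d : ℕ → ℝ and r : ℕ → ℝ be sequences such that m0(j) = mf(j)·exp(d(j)/c) for every j with 1 ≤ j ≤ n + 1, and m0(j+1) = mf(j) − r(j) for every j with 1 ≤ j ≤ n. Then m0(1) = mf(n+1)·exp((Σ_{j=1}^{n+1} d(j))/c) + Σ_{j=1}^{n} r(j)·exp((Σ_{k=1}^{j} d(k))/c). -/
import Mathlib


/-- Initial (wet) servicer mass in terms of final (dry) mass and refuel masses:
from the rocket equations `m0 j = mf j * exp (d j / c)` for `1 ≤ j ≤ n + 1` and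
mass conservation `m0 (j+1) = mf j - r j` for `1 ≤ j ≤ n`, one gets
`m0 1 = mf (n+1) * exp ((∑_{j=1}^{n+1} d j)/c) + ∑_{j=1}^{n} r j * exp ((∑_{k=1}^{j} d k)/c)`. -/
theorem stmt_1 (n : ℕ) (hn : 1 ≤ n) (c : ℝ) (hc : 0 < c)
    (m0 mf d r : ℕ → ℝ)
    (hrocket : ∀ j : ℕ, 1 ≤ j → j ≤ n + 1 → m0 j = mf j * Real.exp (d j / c))
    (hmass : ∀ j : ℕ, 1 ≤ j → j ≤ n → m0 (j + 1) = mf j - r j) :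
    m0 1 = mf (n + 1) * Real.exp ((∑ j ∈ Finset.Icc 1 (n + 1), d j) / c) +
      ∑ j ∈ Finset.Icc 1 n,
        r j * Real.exp ((∑ k ∈ Finset.Icc 1 j, d k) / c) := by
  induction n, hn using Nat.le_induction with
  | base =>
    have h1 := hrocket 1 (by norm_num) (by norm_num)
    have h2 := hrocket 2 (by norm_num) (by norm_num)
    have hm := hmass 1 le_rfl le_rfl
    have e12 : Finset.Icc 1 2 = ({1, 2} : Finset ℕ) := by decide
    have e11 : Finset.Icc 1 1 = ({1} : Finset ℕ) := by decide
    simp only [e12, e11, Finset.sum_insert (by decide : (1:ℕ) ∉ ({2} : Finset ℕ)),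
      Finset.sum_singleton]
    rw [h1, show mf 1 = m0 2 + r 1 by linarith, h2, add_div, Real.exp_add]
    ring
  | succ n hn ih =>
    have ih' := ih (fun j hj hj' => hrocket j hj (by omega))
      (fun j hj hj' => hmass j hj (by omega))
    have h2 := hrocket (n + 2) (by omega) (by omega)
    have hm := hmass (n + 1) (by omega) le_rfl
    rw [ih', show mf (n+1) = m0 (n+2) + r (n+1) by linarith, h2]
    rw [Finset.sum_Icc_succ_top (by omega : 1 ≤ n + 1 + 1) d,
        Finset.sum_Icc_succ_top (by omega : 1 ≤ n + 1)
          (fun j => r j * Real.exp ((∑ k ∈ Finset.Icc 1 j, d k) / c))]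
    rw [add_div, Real.exp_add]
    ring
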